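/- Let A be an invertible n×n complex matrix, let k ∈ ℝ^d with d ≥ 2, |k| = κ > 0, and let y₁, …, yₙ ∈ ℝ^d be mutually distinct. Fix j ∈ {1,…,n} and define q_j(k) = Σ_{l=1}^{n} (A⁻¹)_{j,l}·exp(i k·y_l) for k ∈ S_κ^{d-1} (the sphere of radius κ). Then q_j is not identically zero on S_κ^{d-1}. -/

import Mathlib

open scoped RealInnerProductSpace

open Filter Topology MeasureTheory

/-- Auxiliary: if a finite sum of exponentials with unimodular factors vanishes
for all real `t`, and the rates are injective, all coefficients vanish. -/
lemma key_exp_indep {ι : Type*} [DecidableEq ι] (a : ι → ℝ) (c : ι → ℂ) (u : ι → ℝ → ℂ)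
    (hu : ∀ l t, ‖u l t‖ = 1) :
    ∀ S : Finset ι, Set.InjOn a S →
      (∀ t : ℝ, ∑ l ∈ S, c l * Real.exp (t * a l) * u l t = 0) →
      ∀ l ∈ S, c l = 0 := by
  intro S
  induction S using Finset.strongInduction with
  | _ S ih =>
    intro hinj h l hl
    have hne : S.Nonempty := ⟨l, hl⟩
    obtain ⟨L, hLmem, hLmax⟩ := S.exists_max_image a hne
    have hnorm : ∀ (m : ι) (t : ℝ), ‖c m * (Real.exp (t * a m) : ℂ) * u m t‖
        = ‖c m‖ * Real.exp (t * a m) := by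
      intro m t
      rw [norm_mul, norm_mul, hu, mul_one, Complex.norm_real, Real.norm_eq_abs, Real.abs_exp]
    have hcL : c L = 0 := by
      have hbound : ∀ t : ℝ, ‖c L‖ ≤ ∑ m ∈ S.erase L, ‖c m‖ * Real.exp (t * (a m - a L)) := by
        intro t
        have h0 := h t
        rw [← Finset.add_sum_erase _ _ hLmem] at h0
        have h1 : c L * (Real.exp (t * a L) : ℂ) * u L t
            = - ∑ m ∈ S.erase L, c m * (Real.exp (t * a m) : ℂ) * u m t := by
          linear_combination h0
        have h2 : ‖c L‖ * Real.exp (t * a L)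
            ≤ ∑ m ∈ S.erase L, ‖c m‖ * Real.exp (t * a m) := by
          calc ‖c L‖ * Real.exp (t * a L)
              = ‖c L * (Real.exp (t * a L) : ℂ) * u L t‖ := (hnorm L t).symm
            _ = ‖∑ m ∈ S.erase L, c m * (Real.exp (t * a m) : ℂ) * u m t‖ := by
                rw [h1, norm_neg]
            _ ≤ ∑ m ∈ S.erase L, ‖c m * (Real.exp (t * a m) : ℂ) * u m t‖ :=
                norm_sum_le _ _
            _ = ∑ m ∈ S.erase L, ‖c m‖ * Real.exp (t * a m) := by
                exact Finset.sum_congr rfl fun m _ => hnorm m t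
        have h3 : ∀ m : ι, ‖c m‖ * Real.exp (t * a m)
            = ‖c m‖ * Real.exp (t * (a m - a L)) * Real.exp (t * a L) := by
          intro m
          rw [mul_assoc, ← Real.exp_add, show t * (a m - a L) + t * a L = t * a m from by ring]
        rw [Finset.sum_congr rfl (fun m _ => h3 m), ← Finset.sum_mul] at h2
        have hepos : (0:ℝ) < Real.exp (t * a L) := Real.exp_pos _
        calc ‖c L‖ = ‖c L‖ * Real.exp (t * a L) / Real.exp (t * a L) := by
              field_simp
          _ ≤ (∑ m ∈ S.erase L, ‖c m‖ * Real.exp (t * (a m - a L))) * Real.exp (t * a L)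
                / Real.exp (t * a L) := by
              exact div_le_div_of_nonneg_right h2 hepos.le
          _ = ∑ m ∈ S.erase L, ‖c m‖ * Real.exp (t * (a m - a L)) := by
              field_simp
      have htend : Tendsto (fun t : ℝ => ∑ m ∈ S.erase L,
          ‖c m‖ * Real.exp (t * (a m - a L))) atTop (𝓝 0) := by
        have : (0:ℝ) = ∑ m ∈ S.erase L, 0 := by simp
        rw [this]
        refine tendsto_finset_sum _ fun m hm => ?_
        have hmL : m ≠ L := (Finset.mem_erase.mp hm).1
        have hmS : m ∈ S := (Finset.mem_erase.mp hm).2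
        have hlt : a m - a L < 0 := by
          have hle : a m ≤ a L := hLmax m hmS
          have hne' : a m ≠ a L := fun hEq => hmL (hinj hmS hLmem hEq)
          have : a m < a L := lt_of_le_of_ne hle hne'
          linarith
        have : Tendsto (fun t : ℝ => Real.exp (t * (a m - a L))) atTop (𝓝 0) :=
          Real.tendsto_exp_atBot.comp (tendsto_id.atTop_mul_const_of_neg hlt)
        simpa using this.const_mul ‖c m‖
      have : ‖c L‖ ≤ 0 := ge_of_tendsto' htend hbound
      exact norm_le_zero_iff.mp this
    by_cases hlL : l = L
    · exact hlL ▸ hcL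
    · have herase : S.erase L ⊂ S := Finset.erase_ssubset hLmem
      refine ih (S.erase L) herase (hinj.mono ?_) ?_ l (Finset.mem_erase.mpr ⟨hlL, hl⟩)
      · exact fun x hx => (Finset.mem_erase.mp hx).2
      · intro t
        have h0 := h t
        rw [← Finset.add_sum_erase _ _ hLmem, hcL] at h0
        simpa using h0

/-- Lemma 1: with `A` invertible and mutually distinct `y₁,…,yₙ ∈ ℝ^d`, `d ≥ 2`,
the function `qⱼ(k) = ∑ₗ (A⁻¹)ⱼₗ exp(i k·yₗ)` is not identically zero on the sphere
of radius `κ > 0`. -/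
theorem stmt9 (d n : ℕ) (hd : 2 ≤ d) (A : Matrix (Fin n) (Fin n) ℂ)
    (hA : IsUnit A.det) (κ : ℝ) (hκ : 0 < κ)
    (y : Fin n → EuclideanSpace ℝ (Fin d)) (hy : Function.Injective y) (j : Fin n) :
    ¬ (∀ k : EuclideanSpace ℝ (Fin d), ‖k‖ = κ →
        ∑ l, A⁻¹ j l * Complex.exp (Complex.I * (⟪k, y l⟫ : ℝ)) = 0) := by
  intro h
  haveI : Nonempty (Fin d) := ⟨⟨0, by omega⟩⟩
  set c : Fin n → ℂ := fun l => A⁻¹ j l with hc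
  -- the row `j` of `A⁻¹` is not identically zero
  have hrow : ∃ l, c l ≠ 0 := by
    by_contra hall
    push_neg at hall
    have h1 : (A⁻¹ * A) j j = 1 := by
      rw [Matrix.nonsing_inv_mul A hA, Matrix.one_apply_eq]
    rw [Matrix.mul_apply] at h1
    simp only [show ∀ l, A⁻¹ j l = 0 from hall, zero_mul, Finset.sum_const_zero] at h1
    exact zero_ne_one h1
  -- the space is nontrivial
  haveI : Nontrivial (EuclideanSpace ℝ (Fin d)) := by
    have : (EuclideanSpace.single (⟨0, by omega⟩ : Fin d) (1:ℝ)) ≠ 0 := by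
      intro h0
      have := congrArg (fun x : EuclideanSpace ℝ (Fin d) => x ⟨0, by omega⟩) h0
      simp [EuclideanSpace.single_apply] at this
    exact ⟨_, 0, this⟩
  -- find a separating direction
  obtain ⟨v, hv0, hvsep⟩ : ∃ v : EuclideanSpace ℝ (Fin d), v ≠ 0 ∧
      ∀ p : Fin n × Fin n, p.1 ≠ p.2 → ⟪y p.1 - y p.2, v⟫ ≠ 0 := by
    by_contra hcon
    push_neg at hcon
    set U : Set (EuclideanSpace ℝ (Fin d)) := (↑(⊥ : Submodule ℝ (EuclideanSpace ℝ (Fin d)))) ∪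
      ⋃ p : {q : Fin n × Fin n // q.1 ≠ q.2},
        (LinearMap.ker ((innerSL ℝ (y p.1.1 - y p.1.2) : EuclideanSpace ℝ (Fin d) →L[ℝ] ℝ) : EuclideanSpace ℝ (Fin d) →ₗ[ℝ] ℝ) : Set (EuclideanSpace ℝ (Fin d)))
      with hU
    have hsub : Set.univ ⊆ U := by
      intro v _
      rcases eq_or_ne v 0 with rfl | hv0
      · exact Or.inl (by simp)
      · obtain ⟨p, hp, hker⟩ := hcon v hv0
        refine Or.inr (Set.mem_iUnion.mpr ⟨⟨p, hp⟩, ?_⟩)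
        simpa [inner_sub_left] using hker
    have hU0 : volume U = 0 := by
      refine measure_union_null ?_ (measure_iUnion_null fun p => ?_)
      · exact Measure.addHaar_submodule _ _ bot_ne_top
      · refine Measure.addHaar_submodule _ _ ?_
        intro htop
        have hz : y p.1.1 - y p.1.2 ≠ 0 := sub_ne_zero.mpr (fun hEq => p.2 (hy hEq))
        have hmem : (y p.1.1 - y p.1.2) ∈ LinearMap.ker ((innerSL ℝ (y p.1.1 - y p.1.2) : EuclideanSpace ℝ (Fin d) →L[ℝ] ℝ) : EuclideanSpace ℝ (Fin d) →ₗ[ℝ] ℝ) := by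
          rw [htop]; trivial
        rw [LinearMap.mem_ker] at hmem
        simp only [ContinuousLinearMap.coe_coe, innerSL_apply_apply] at hmem
        exact hz (inner_self_eq_zero.mp hmem)
    have h0 : volume (Set.univ : Set (EuclideanSpace ℝ (Fin d))) = 0 :=
      measure_mono_null hsub hU0
    have hpos : 0 < volume (Set.univ : Set (EuclideanSpace ℝ (Fin d))) :=
      isOpen_univ.measure_pos volume Set.univ_nonempty
    rw [h0] at hpos
    exact lt_irrefl _ hpos
  -- a normalized separating direction
  obtain ⟨v', hv'1, hv'sep⟩ : ∃ u : EuclideanSpace ℝ (Fin d), ‖u‖ = 1 ∧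
      Function.Injective fun l => (⟪u, y l⟫ : ℝ) := by
    have hnv : ‖v‖ ≠ 0 := norm_ne_zero_iff.mpr hv0
    refine ⟨‖v‖⁻¹ • v, norm_smul_inv_norm hv0, ?_⟩
    intro l m hEq
    by_contra hlm
    apply hvsep (l, m) hlm
    simp only [real_inner_smul_left] at hEq
    have h2 : ⟪v, y l⟫ = ⟪v, y m⟫ := by
      have := mul_left_cancel₀ (inv_ne_zero hnv) hEq
      exact this
    show (⟪y l - y m, v⟫ : ℝ) = 0
    rw [inner_sub_left, real_inner_comm v (y l), real_inner_comm v (y m), h2, sub_self]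
  set a : Fin n → ℝ := fun l => ⟪v', y l⟫ with ha
  have hainj : Function.Injective a := hv'sep
  have hv'0 : v' ≠ 0 := by
    intro h0; rw [h0, norm_zero] at hv'1; exact zero_ne_one hv'1
  -- a unit vector orthogonal to v'
  obtain ⟨w, hw1, hvw⟩ : ∃ w : EuclideanSpace ℝ (Fin d), ‖w‖ = 1 ∧ ⟪v', w⟫ = 0 := by
    have hfr : Module.finrank ℝ (EuclideanSpace ℝ (Fin d)) = d := finrank_euclideanSpace_fin
    have hspan : Module.finrank ℝ (ℝ ∙ v') = 1 := finrank_span_singleton hv'0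
    have hsum := Submodule.finrank_add_finrank_orthogonal (K := (ℝ ∙ v'))
    have hpos : 0 < Module.finrank ℝ ((ℝ ∙ v')ᗮ) := by
      rw [hfr] at hsum; omega
    have hbot : ((ℝ ∙ v')ᗮ) ≠ ⊥ := by
      intro h0
      rw [h0, finrank_bot] at hpos
      exact lt_irrefl _ hpos
    obtain ⟨x, hxmem, hx0⟩ := Submodule.exists_mem_ne_zero_of_ne_bot hbot
    refine ⟨‖x‖⁻¹ • x, norm_smul_inv_norm hx0, ?_⟩
    rw [real_inner_smul_right]
    have h2 : ⟪v', x⟫ = 0 :=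
      (Submodule.mem_orthogonal _ _).mp hxmem v' (Submodule.mem_span_singleton_self v')
    rw [h2, mul_zero]
  set b : Fin n → ℝ := fun l => ⟪w, y l⟫ with hb
  -- the entire function
  set F : ℂ → ℂ := fun t => ∑ l, c l *
    Complex.exp (Complex.I * κ * (Complex.cos t * a l + Complex.sin t * b l)) with hF
  have hFdiff : Differentiable ℂ F := by
    apply Differentiable.fun_sum
    intro l _
    apply Differentiable.const_mul
    apply Differentiable.cexp
    apply Differentiable.const_mul
    exact (Complex.differentiable_cos.mul_const _).add (Complex.differentiable_sin.mul_const _)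
  -- F vanishes on the reals
  have hFreal : ∀ s : ℝ, F s = 0 := by
    intro s
    set k : EuclideanSpace ℝ (Fin d) := (κ * Real.cos s) • v' + (κ * Real.sin s) • w with hk
    have hkn : ‖k‖ = κ := by
      have hinner : ⟪(κ * Real.cos s) • v', (κ * Real.sin s) • w⟫ = 0 := by
        rw [real_inner_smul_left, real_inner_smul_right, hvw]; ring
      have hsq : ‖k‖ ^ 2 = κ ^ 2 := by
        rw [hk, norm_add_sq_real, hinner, norm_smul, hv'1, norm_smul, hw1]
        simp only [mul_one, Real.norm_eq_abs]
        rw [sq_abs, sq_abs]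
        nlinarith [Real.sin_sq_add_cos_sq s]
      rw [← Real.sqrt_sq (norm_nonneg k), hsq, Real.sqrt_sq hκ.le]
    have hik : ∀ l, (⟪k, y l⟫ : ℝ) = κ * Real.cos s * a l + κ * Real.sin s * b l := by
      intro l
      rw [hk, inner_add_left, real_inner_smul_left, real_inner_smul_left]
    have h0 := h k hkn
    rw [hF, ← h0]
    refine Finset.sum_congr rfl fun l _ => ?_
    congr 1
    rw [hik l]
    push_cast [← Complex.ofReal_cos, ← Complex.ofReal_sin]
    ring
  -- F vanishes identically
  have hFall : ∀ t : ℂ, F t = 0 := by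
    have hfreq : ∃ᶠ z in 𝓝[≠] (0:ℂ), F z = 0 := by
      have htend : Tendsto (fun m : ℕ => ((1 / (m+1) : ℝ) : ℂ)) atTop (𝓝[≠] (0:ℂ)) := by
        apply tendsto_nhdsWithin_of_tendsto_nhds_of_eventually_within
        · have h1 : Tendsto (fun m : ℕ => (1 / (m+1) : ℝ)) atTop (𝓝 0) :=
            tendsto_one_div_add_atTop_nhds_zero_nat
          have h2 := (Complex.continuous_ofReal.tendsto 0).comp h1
          simpa [Function.comp_def] using h2
        · filter_upwards with m
          simp only [Set.mem_compl_iff, Set.mem_singleton_iff]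
          intro hEq
          have h3 : (1 / (m+1) : ℝ) = 0 := by exact_mod_cast hEq
          have h4 : (0:ℝ) < 1 / (m+1) := by positivity
          linarith
      exact htend.frequently (Filter.Frequently.of_forall fun m => hFreal _)
    have hEqOn := (hFdiff.differentiableOn.analyticOnNhd
      isOpen_univ).eqOn_zero_of_preconnected_of_frequently_eq_zero
      isPreconnected_univ (Set.mem_univ (0:ℂ)) hfreq
    intro t
    exact hEqOn (Set.mem_univ t)
  -- evaluate along the complexified circle
  have hG : ∀ t : ℝ, ∑ l, c l * (Real.exp (t * a l) : ℂ) *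
      Complex.exp (Complex.I * (κ * Real.cosh (Real.arsinh (t / κ)) * b l)) = 0 := by
    intro t
    set s : ℝ := Real.arsinh (t / κ) with hs
    have hsinh : κ * Real.sinh s = t := by
      rw [hs, Real.sinh_arsinh]
      field_simp
    have hT := hFall (↑(Real.pi / 2) + ↑s * Complex.I)
    rw [hF] at hT
    rw [← hT]
    refine Finset.sum_congr rfl fun l _ => ?_
    have hcosT : Complex.cos (↑(Real.pi / 2) + ↑s * Complex.I)
        = -(Real.sinh s : ℂ) * Complex.I := by
      rw [Complex.cos_add, Complex.cos_mul_I, Complex.sin_mul_I,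
        ← Complex.ofReal_cos, ← Complex.ofReal_sin,
        Real.cos_pi_div_two, Real.sin_pi_div_two]
      push_cast [← Complex.ofReal_sinh]
      ring
    have hsinT : Complex.sin (↑(Real.pi / 2) + ↑s * Complex.I)
        = (Real.cosh s : ℂ) := by
      rw [Complex.sin_add, Complex.cos_mul_I, Complex.sin_mul_I,
        ← Complex.ofReal_cos, ← Complex.ofReal_sin,
        Real.cos_pi_div_two, Real.sin_pi_div_two]
      push_cast [← Complex.ofReal_cosh]
      ring
    rw [hcosT, hsinT, Complex.ofReal_exp, mul_assoc, ← Complex.exp_add]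
    congr 1
    congr 1
    have ht : (t : ℂ) = ↑κ * ↑(Real.sinh s) := by exact_mod_cast hsinh.symm
    push_cast [← Complex.ofReal_sinh, ← Complex.ofReal_cosh]
    rw [ht]
    linear_combination (↑κ * (Real.sinh s : ℂ) * (a l : ℂ)) * Complex.I_sq
  -- conclude
  obtain ⟨l, hl⟩ := hrow
  apply hl
  refine key_exp_indep a c
    (fun l t => Complex.exp (Complex.I * (κ * Real.cosh (Real.arsinh (t / κ)) * b l)))
    (fun l t => ?_) Finset.univ (hainj.injOn) hG l (Finset.mem_univ l)
  rw [Complex.norm_exp]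
  simp
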